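/- Let κ(x) = ⌊log x / log 2⌋ and H(x) = 1 + Σ_{k=4}^{κ(x)} x^{1/k - 1/3} for x ≥ 16. Then for every integer j ≥ 9 and every real x ≥ 2^j, H(x) ≤ H(2^j). -/

import Mathlib

/-- `κ(x) = ⌊log x / log 2⌋`, the largest integer `k` with `x^(1/k) ≥ 2`. -/
noncomputable def kappa (x : ℝ) : ℕ := ⌊Real.log x / Real.log 2⌋₊

/-- `H(x) = 1 + ∑_{k=4}^{κ(x)} x^(1/k - 1/3)`. -/
noncomputable def H (x : ℝ) : ℝ := 1 + ∑ k ∈ Finset.Icc 4 (kappa x), x ^ ((1 : ℝ) / k - 1 / 3)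

lemma le_two_rpow (p q : ℕ) (a : ℝ) (ha : 0 ≤ a) (hq : 0 < q) (h : a ^ q ≤ 2 ^ p) :
    a ≤ (2:ℝ) ^ ((p:ℝ)/q) := by
  have h2 : ((2:ℝ) ^ ((p:ℝ)/q)) ^ q = 2 ^ p := by
    rw [← Real.rpow_natCast ((2:ℝ) ^ ((p:ℝ)/q)) q, ← Real.rpow_mul (by norm_num),
      div_mul_cancel₀, Real.rpow_natCast]
    exact_mod_cast hq.ne'
  exact le_of_pow_le_pow_left₀ hq.ne' (by positivity) (h.trans h2.ge)

lemma two_rpow_le (p q : ℕ) (a : ℝ) (ha : 0 ≤ a) (hq : 0 < q) (h : (2:ℝ) ^ p ≤ a ^ q) :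
    (2:ℝ) ^ ((p:ℝ)/q) ≤ a := by
  have h2 : ((2:ℝ) ^ ((p:ℝ)/q)) ^ q = 2 ^ p := by
    rw [← Real.rpow_natCast ((2:ℝ) ^ ((p:ℝ)/q)) q, ← Real.rpow_mul (by norm_num),
      div_mul_cancel₀, Real.rpow_natCast]
    exact_mod_cast hq.ne'
  exact le_of_pow_le_pow_left₀ hq.ne' ha (h2.trans_le h)

/-- The exponents are nonpositive for `k ≥ 4`. -/
lemma e_nonpos (k : ℕ) (hk : 4 ≤ k) : ((1:ℝ)/k - 1/3) ≤ 0 := by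
  have hk4 : (4:ℝ) ≤ (k:ℝ) := by exact_mod_cast hk
  have : (1:ℝ)/k ≤ 1/4 := by
    apply div_le_div_of_nonneg_left (by norm_num) (by norm_num) hk4
  linarith

lemma one_sub_nonneg (k : ℕ) (hk : 4 ≤ k) : (0:ℝ) ≤ 1 - (2:ℝ) ^ ((1:ℝ)/k - 1/3) := by
  have h1 : (2:ℝ) ^ ((1:ℝ)/k - 1/3) ≤ (2:ℝ) ^ (0:ℝ) :=
    Real.rpow_le_rpow_of_exponent_le (by norm_num) (e_nonpos k hk)
  rw [Real.rpow_zero] at h1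
  linarith

/-- The key numeric inequality. -/
lemma key_sum : (1:ℝ) ≤ ∑ k ∈ Finset.Icc (4:ℕ) 9,
    ((2:ℝ) ^ ((9:ℝ)/k - 2/3) * (1 - (2:ℝ) ^ ((1:ℝ)/k - 1/3))) := by
  have hexp : ∀ k : ℕ, (2:ℝ) ^ ((9:ℝ)/k - 2/3) * (1 - (2:ℝ) ^ ((1:ℝ)/k - 1/3))
      = (2:ℝ) ^ ((9:ℝ)/k - 2/3) - (2:ℝ) ^ ((9:ℝ)/k - 2/3 + ((1:ℝ)/k - 1/3)) := by
    intro k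
    rw [mul_one_sub, ← Real.rpow_add (by norm_num)]
  have hIcc : Finset.Icc (4:ℕ) 9 = ({4,5,6,7,8,9} : Finset ℕ) := rfl
  rw [hIcc]
  rw [show ({4,5,6,7,8,9} : Finset ℕ) = insert 4 (insert 5 (insert 6 (insert 7
    (insert 8 ({9} : Finset ℕ))))) from rfl]
  rw [Finset.sum_insert (by decide), Finset.sum_insert (by decide),
    Finset.sum_insert (by decide), Finset.sum_insert (by decide),
    Finset.sum_insert (by decide), Finset.sum_singleton]
  rw [hexp 4, hexp 5, hexp 6, hexp 7, hexp 8, hexp 9]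
  -- lower bounds for positive terms
  have l4 : (2.99:ℝ) ≤ (2:ℝ) ^ ((9:ℝ)/(4:ℕ) - 2/3) := by
    have h : ((9:ℝ)/((4:ℕ):ℝ) - 2/3) = ((19:ℕ):ℝ)/((12:ℕ):ℝ) := by norm_num
    rw [h]; exact le_two_rpow 19 12 _ (by norm_num) (by norm_num) (by norm_num)
  have l5 : (2.19:ℝ) ≤ (2:ℝ) ^ ((9:ℝ)/(5:ℕ) - 2/3) := by
    have h : ((9:ℝ)/((5:ℕ):ℝ) - 2/3) = ((17:ℕ):ℝ)/((15:ℕ):ℝ) := by norm_num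
    rw [h]; exact le_two_rpow 17 15 _ (by norm_num) (by norm_num) (by norm_num)
  have l6 : (1.78:ℝ) ≤ (2:ℝ) ^ ((9:ℝ)/(6:ℕ) - 2/3) := by
    have h : ((9:ℝ)/((6:ℕ):ℝ) - 2/3) = ((5:ℕ):ℝ)/((6:ℕ):ℝ) := by norm_num
    rw [h]; exact le_two_rpow 5 6 _ (by norm_num) (by norm_num) (by norm_num)
  have l7 : (1.53:ℝ) ≤ (2:ℝ) ^ ((9:ℝ)/(7:ℕ) - 2/3) := by
    have h : ((9:ℝ)/((7:ℕ):ℝ) - 2/3) = ((13:ℕ):ℝ)/((21:ℕ):ℝ) := by norm_num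
    rw [h]; exact le_two_rpow 13 21 _ (by norm_num) (by norm_num) (by norm_num)
  have l8 : (1.37:ℝ) ≤ (2:ℝ) ^ ((9:ℝ)/(8:ℕ) - 2/3) := by
    have h : ((9:ℝ)/((8:ℕ):ℝ) - 2/3) = ((11:ℕ):ℝ)/((24:ℕ):ℝ) := by norm_num
    rw [h]; exact le_two_rpow 11 24 _ (by norm_num) (by norm_num) (by norm_num)
  have l9 : (1.25:ℝ) ≤ (2:ℝ) ^ ((9:ℝ)/(9:ℕ) - 2/3) := by
    have h : ((9:ℝ)/((9:ℕ):ℝ) - 2/3) = ((1:ℕ):ℝ)/((3:ℕ):ℝ) := by norm_num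
    rw [h]; exact le_two_rpow 1 3 _ (by norm_num) (by norm_num) (by norm_num)
  -- upper bounds for negative terms
  have u4 : (2:ℝ) ^ ((9:ℝ)/(4:ℕ) - 2/3 + ((1:ℝ)/(4:ℕ) - 1/3)) ≤ 2.83 := by
    have h : ((9:ℝ)/((4:ℕ):ℝ) - 2/3 + ((1:ℝ)/((4:ℕ):ℝ) - 1/3)) = ((3:ℕ):ℝ)/((2:ℕ):ℝ) := by
      norm_num
    rw [h]; exact two_rpow_le 3 2 _ (by norm_num) (by norm_num) (by norm_num)
  have u5 : (2:ℝ) ^ ((9:ℝ)/(5:ℕ) - 2/3 + ((1:ℝ)/(5:ℕ) - 1/3)) ≤ 2 := by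
    have h : ((9:ℝ)/((5:ℕ):ℝ) - 2/3 + ((1:ℝ)/((5:ℕ):ℝ) - 1/3)) = 1 := by norm_num
    rw [h, Real.rpow_one]
  have u6 : (2:ℝ) ^ ((9:ℝ)/(6:ℕ) - 2/3 + ((1:ℝ)/(6:ℕ) - 1/3)) ≤ 1.588 := by
    have h : ((9:ℝ)/((6:ℕ):ℝ) - 2/3 + ((1:ℝ)/((6:ℕ):ℝ) - 1/3)) = ((2:ℕ):ℝ)/((3:ℕ):ℝ) := by
      norm_num
    rw [h]; exact two_rpow_le 2 3 _ (by norm_num) (by norm_num) (by norm_num)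
  have u7 : (2:ℝ) ^ ((9:ℝ)/(7:ℕ) - 2/3 + ((1:ℝ)/(7:ℕ) - 1/3)) ≤ 1.347 := by
    have h : ((9:ℝ)/((7:ℕ):ℝ) - 2/3 + ((1:ℝ)/((7:ℕ):ℝ) - 1/3)) = ((3:ℕ):ℝ)/((7:ℕ):ℝ) := by
      norm_num
    rw [h]; exact two_rpow_le 3 7 _ (by norm_num) (by norm_num) (by norm_num)
  have u8 : (2:ℝ) ^ ((9:ℝ)/(8:ℕ) - 2/3 + ((1:ℝ)/(8:ℕ) - 1/3)) ≤ 1.19 := by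
    have h : ((9:ℝ)/((8:ℕ):ℝ) - 2/3 + ((1:ℝ)/((8:ℕ):ℝ) - 1/3)) = ((1:ℕ):ℝ)/((4:ℕ):ℝ) := by
      norm_num
    rw [h]; exact two_rpow_le 1 4 _ (by norm_num) (by norm_num) (by norm_num)
  have u9 : (2:ℝ) ^ ((9:ℝ)/(9:ℕ) - 2/3 + ((1:ℝ)/(9:ℕ) - 1/3)) ≤ 1.081 := by
    have h : ((9:ℝ)/((9:ℕ):ℝ) - 2/3 + ((1:ℝ)/((9:ℕ):ℝ) - 1/3)) = ((1:ℕ):ℝ)/((9:ℕ):ℝ) := by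
      norm_num
    rw [h]; exact two_rpow_le 1 9 _ (by norm_num) (by norm_num) (by norm_num)
  linarith

lemma kappa_two_pow (n : ℕ) : kappa ((2:ℝ) ^ n) = n := by
  unfold kappa
  have h2 : Real.log 2 ≠ 0 := ne_of_gt (Real.log_pos (by norm_num))
  rw [Real.log_pow, mul_div_assoc, div_self h2, mul_one, Nat.floor_natCast]

lemma two_pow_rpow (n : ℕ) (y : ℝ) : ((2:ℝ) ^ n) ^ y = (2:ℝ) ^ ((n:ℝ) * y) := by
  rw [← Real.rpow_natCast 2 n, ← Real.rpow_mul (by norm_num)]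

lemma H_step (m : ℕ) (hm : 9 ≤ m) : H ((2:ℝ) ^ (m+1)) ≤ H ((2:ℝ) ^ m) := by
  unfold H
  rw [kappa_two_pow, kappa_two_pow]
  refine add_le_add_right ?_ 1
  have gle : ∀ k : ℕ, 4 ≤ k →
      ((2:ℝ) ^ (m+1)) ^ ((1:ℝ)/k - 1/3) ≤ ((2:ℝ) ^ m) ^ ((1:ℝ)/k - 1/3) := by
    intro k hk
    rw [two_pow_rpow, two_pow_rpow]
    apply Real.rpow_le_rpow_of_exponent_le (by norm_num)
    have he := e_nonpos k hk
    have hcast : ((m:ℝ)) ≤ ((m+1:ℕ):ℝ) := by push_cast; linarith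
    nlinarith
  rw [Finset.sum_Icc_succ_top (by omega : 4 ≤ m + 1)]
  have hmain : ((2:ℝ) ^ (m+1)) ^ ((1:ℝ)/((m+1 : ℕ):ℝ) - 1/3) ≤
      ∑ k ∈ Finset.Icc 4 m,
        (((2:ℝ) ^ m) ^ ((1:ℝ)/k - 1/3) - ((2:ℝ) ^ (m+1)) ^ ((1:ℝ)/k - 1/3)) := by
    have hsub : Finset.Icc 4 9 ⊆ Finset.Icc 4 m := by
      intro k hk
      simp only [Finset.mem_Icc] at *
      omega
    have h1 : ∑ k ∈ Finset.Icc (4:ℕ) 9,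
        (((2:ℝ) ^ m) ^ ((1:ℝ)/k - 1/3) - ((2:ℝ) ^ (m+1)) ^ ((1:ℝ)/k - 1/3)) ≤
        ∑ k ∈ Finset.Icc 4 m,
        (((2:ℝ) ^ m) ^ ((1:ℝ)/k - 1/3) - ((2:ℝ) ^ (m+1)) ^ ((1:ℝ)/k - 1/3)) := by
      apply Finset.sum_le_sum_of_subset_of_nonneg hsub
      intro k hk _
      have hk4 : 4 ≤ k := (Finset.mem_Icc.mp hk).1
      have := gle k hk4
      linarith
    refine le_trans ?_ h1
    have hL : ((2:ℝ) ^ (m+1)) ^ ((1:ℝ)/((m+1 : ℕ):ℝ) - 1/3) = (2:ℝ) ^ ((2 - (m:ℝ))/3) := by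
      rw [two_pow_rpow]
      congr 1
      have hm1 : ((m:ℝ) + 1) ≠ 0 := by positivity
      push_cast
      field_simp
      ring
    rw [hL]
    have hterm : ∀ k ∈ Finset.Icc (4:ℕ) 9,
        (2:ℝ) ^ ((2 - (m:ℝ))/3) * ((2:ℝ) ^ ((9:ℝ)/k - 2/3) * (1 - (2:ℝ) ^ ((1:ℝ)/k - 1/3)))
        ≤ ((2:ℝ) ^ m) ^ ((1:ℝ)/k - 1/3) - ((2:ℝ) ^ (m+1)) ^ ((1:ℝ)/k - 1/3) := by
      intro k hk
      obtain ⟨hk4, hk9⟩ := Finset.mem_Icc.mp hk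
      have hk0 : (0:ℝ) < (k:ℝ) := by exact_mod_cast (show 0 < k by omega)
      have hone := one_sub_nonneg k hk4
      rw [two_pow_rpow m, two_pow_rpow (m+1)]
      have hsplit : (2:ℝ) ^ (((m+1:ℕ):ℝ) * ((1:ℝ)/k - 1/3)) =
          (2:ℝ) ^ ((m:ℝ) * ((1:ℝ)/k - 1/3)) * (2:ℝ) ^ ((1:ℝ)/k - 1/3) := by
        rw [← Real.rpow_add (by norm_num)]
        congr 1
        push_cast
        ring
      have hcomb : (2:ℝ) ^ ((2 - (m:ℝ))/3) * (2:ℝ) ^ ((9:ℝ)/k - 2/3) =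
          (2:ℝ) ^ ((9:ℝ)/k - (m:ℝ)/3) := by
        rw [← Real.rpow_add (by norm_num)]
        congr 1
        ring
      have hle : (2:ℝ) ^ ((9:ℝ)/k - (m:ℝ)/3) ≤ (2:ℝ) ^ ((m:ℝ) * ((1:ℝ)/k - 1/3)) := by
        apply Real.rpow_le_rpow_of_exponent_le (by norm_num)
        have h9m : (9:ℝ) ≤ (m:ℝ) := by exact_mod_cast hm
        have hdiv : (9:ℝ)/k ≤ (m:ℝ)/k := by gcongr
        have heq : (m:ℝ) * ((1:ℝ)/k - 1/3) = (m:ℝ)/k - (m:ℝ)/3 := by ring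
        rw [heq]
        linarith
      calc (2:ℝ) ^ ((2 - (m:ℝ))/3) * ((2:ℝ) ^ ((9:ℝ)/k - 2/3) * (1 - (2:ℝ) ^ ((1:ℝ)/k - 1/3)))
          = (2:ℝ) ^ ((9:ℝ)/k - (m:ℝ)/3) * (1 - (2:ℝ) ^ ((1:ℝ)/k - 1/3)) := by
            rw [← mul_assoc, hcomb]
        _ ≤ (2:ℝ) ^ ((m:ℝ) * ((1:ℝ)/k - 1/3)) * (1 - (2:ℝ) ^ ((1:ℝ)/k - 1/3)) :=
            mul_le_mul_of_nonneg_right hle hone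
        _ = (2:ℝ) ^ ((m:ℝ) * ((1:ℝ)/k - 1/3)) -
            (2:ℝ) ^ (((m+1:ℕ):ℝ) * ((1:ℝ)/k - 1/3)) := by
            rw [hsplit]; ring
    calc (2:ℝ) ^ ((2 - (m:ℝ))/3) = (2:ℝ) ^ ((2 - (m:ℝ))/3) * 1 := (mul_one _).symm
      _ ≤ (2:ℝ) ^ ((2 - (m:ℝ))/3) * ∑ k ∈ Finset.Icc (4:ℕ) 9,
          ((2:ℝ) ^ ((9:ℝ)/k - 2/3) * (1 - (2:ℝ) ^ ((1:ℝ)/k - 1/3))) := by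
          apply mul_le_mul_of_nonneg_left key_sum (Real.rpow_nonneg (by norm_num) _)
      _ = ∑ k ∈ Finset.Icc (4:ℕ) 9, (2:ℝ) ^ ((2 - (m:ℝ))/3) *
          ((2:ℝ) ^ ((9:ℝ)/k - 2/3) * (1 - (2:ℝ) ^ ((1:ℝ)/k - 1/3))) := Finset.mul_sum _ _ _
      _ ≤ ∑ k ∈ Finset.Icc (4:ℕ) 9,
          (((2:ℝ) ^ m) ^ ((1:ℝ)/k - 1/3) - ((2:ℝ) ^ (m+1)) ^ ((1:ℝ)/k - 1/3)) :=
          Finset.sum_le_sum hterm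
  rw [Finset.sum_sub_distrib] at hmain
  linarith

theorem H_le (j : ℕ) (hj : 9 ≤ j) (x : ℝ) (hx : (2 : ℝ) ^ j ≤ x) : H x ≤ H ((2 : ℝ) ^ j) := by
  have hx0 : (0:ℝ) < x := lt_of_lt_of_le (by positivity) hx
  have hlog2 : (0:ℝ) < Real.log 2 := Real.log_pos (by norm_num)
  have hjk : j ≤ kappa x := by
    apply Nat.le_floor
    rw [le_div_iff₀ hlog2]
    calc (j:ℝ) * Real.log 2 = Real.log ((2:ℝ)^j) := by rw [Real.log_pow]
      _ ≤ Real.log x := Real.log_le_log (by positivity) hx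
  have h2mx : (2:ℝ) ^ (kappa x) ≤ x := by
    have hfl : ((kappa x : ℕ):ℝ) ≤ Real.log x / Real.log 2 := Nat.floor_le (by
      apply div_nonneg _ hlog2.le
      have : (0:ℝ) ≤ Real.log ((2:ℝ)^j) := by
        rw [Real.log_pow]
        positivity
      linarith [Real.log_le_log (show (0:ℝ) < (2:ℝ)^j by positivity) hx])
    have hmul : ((kappa x : ℕ):ℝ) * Real.log 2 ≤ Real.log x := by
      rw [← le_div_iff₀ hlog2]; exact hfl
    rw [← Real.log_pow] at hmul
    have := Real.exp_le_exp.mpr hmul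
    rwa [Real.exp_log (by positivity), Real.exp_log hx0] at this
  have h1 : H x ≤ H ((2:ℝ) ^ (kappa x)) := by
    unfold H
    rw [kappa_two_pow]
    refine add_le_add_right (Finset.sum_le_sum ?_) 1
    intro k hk
    have hk4 : 4 ≤ k := (Finset.mem_Icc.mp hk).1
    exact Real.rpow_le_rpow_of_nonpos (by positivity) h2mx (e_nonpos k hk4)
  have h2 : ∀ n, j ≤ n → H ((2:ℝ)^n) ≤ H ((2:ℝ)^j) := by
    intro n hn
    induction n, hn using Nat.le_induction with
    | base => exact le_refl _
    | succ n hn ih => exact (H_step n (le_trans hj hn)).trans ih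
  exact h1.trans (h2 _ hjk)
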